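/- LLPO_{m/k} is one-query bilayered Turing reducible to Error_{m/(k+1)}: there exist a computable outer reduction K and a secret inner reduction L such that for every e with |{j < k : φ_e(j)↓}| ≤ m and every a ∈ {0,...,k} \ L(e), K(e,a) is defined and φ_e(K(e,a)) diverges with K(e,a) < k. -/

import Mathlib

/-- The `e`-th partial computable function. -/
def φ (e n : ℕ) : Part ℕ :=
  (Denumerable.ofNat Nat.Partrec.Code e).eval n

open Nat.Partrec (Code)
open Nat.Partrec.Code

namespace Stmt3Aux

/-- Code of `e`. -/
def cd (e : ℕ) : Code := Denumerable.ofNat Code e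

/-- List of `j < k` for which `φ_e(j)` halts within `s` steps. -/
def fl (k e s : ℕ) : List ℕ :=
  (List.range k).filter fun j => (evaln s (cd e) j).isSome

def cnt (k e s : ℕ) : ℕ := (fl k e s).length

def pick (k e s : ℕ) : ℕ :=
  (List.range k).findIdx fun j => (evaln s (cd e) j).isNone

/-- The outer reduction. -/
def K (m k : ℕ) (e a : ℕ) : Part ℕ :=
  bif a < k then Part.some a
  else (Nat.rfind fun s => Part.some (decide (cnt k e s = m))).map (pick k e)

theorem evaln_comp_prim :
    Primrec fun x : (ℕ × ℕ) × ℕ => evaln x.1.2 (cd x.1.1) x.2 :=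
  primrec_evaln.comp <|
    ((Primrec.snd.comp .fst).pair ((Primrec.ofNat Code).comp (Primrec.fst.comp .fst))).pair
      Primrec.snd

theorem cnt_prim (k : ℕ) : Primrec fun p : ℕ × ℕ => cnt k p.1 p.2 := by
  have hc : PrimrecPred fun z : (ℕ × ℕ) × ℕ =>
      (evaln z.1.2 (cd z.1.1) z.2).isSome = true := by
    refine primrecPred_iff_primrec_decide.2 ?_
    refine ((Primrec.option_isSome.comp evaln_comp_prim).of_eq ?_)
    intro z
    cases h : (evaln z.1.2 (cd z.1.1) z.2).isSome <;> simp [h]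
  have hg : Primrec₂ fun (x : ℕ × ℕ) (j : ℕ) =>
      if (evaln x.2 (cd x.1) j).isSome = true then some j else (none : Option ℕ) :=
    Primrec.to₂ (Primrec.ite hc (Primrec.option_some.comp Primrec.snd)
      (Primrec.const Option.none))
  have h : Primrec fun p : ℕ × ℕ => fl k p.1 p.2 := by
    refine (Primrec.listFilterMap (Primrec.const (List.range k)) hg).of_eq fun p => ?_
    rw [fl, ← List.filterMap_eq_filter]
    rfl
  exact Primrec.list_length.comp h

theorem pick_prim (k : ℕ) : Primrec fun p : ℕ × ℕ => pick k p.1 p.2 := by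
  have hpr : Primrec fun z : (ℕ × ℕ) × ℕ => (evaln z.1.2 (cd z.1.1) z.2).isNone := by
    refine (Primrec.not.comp (Primrec.option_isSome.comp evaln_comp_prim)).of_eq fun z => ?_
    cases evaln z.1.2 (cd z.1.1) z.2 <;> rfl
  exact Primrec.list_findIdx (Primrec.const (List.range k)) (Primrec.to₂ hpr)

theorem K_partrec (m k : ℕ) : Partrec₂ (K m k) := by
  have hc : Computable fun p : ℕ × ℕ => decide (p.2 < k) :=
    (Primrec.nat_lt.comp Primrec.snd (Primrec.const k)).decide.to_comp
  have hf : Partrec fun p : ℕ × ℕ => (Part.some p.2 : Part ℕ) := Computable.snd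
  have hq : Partrec₂ fun (p : ℕ × ℕ) (s : ℕ) =>
      (Part.some (decide (cnt k p.1 s = m)) : Part Bool) := by
    exact Computable₂.partrec₂ <| Computable.to₂ <|
      ((Primrec.eq.comp ((cnt_prim k).comp ((Primrec.fst.comp .fst).pair Primrec.snd))
        (Primrec.const m)).decide.to_comp)
  have hpick : Computable₂ fun (p : ℕ × ℕ) (s : ℕ) => pick k p.1 s := by
    exact Computable.to₂ <|
      ((pick_prim k).comp ((Primrec.fst.comp .fst).pair Primrec.snd)).to_comp
  have hg : Partrec fun p : ℕ × ℕ =>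
      (Nat.rfind fun s => Part.some (decide (cnt k p.1 s = m))).map (pick k p.1) :=
    (Partrec.rfind hq).map hpick
  exact (Partrec.cond hc hf hg).of_eq fun p => rfl

theorem mem_fl {k e s j : ℕ} (h : j ∈ fl k e s) : j < k ∧ (φ e j).Dom := by
  rw [fl, List.mem_filter, List.mem_range] at h
  refine ⟨h.1, ?_⟩
  obtain ⟨x, hx⟩ := Option.isSome_iff_exists.1 h.2
  exact Part.dom_iff_mem.2 ⟨x, evaln_sound (x := x) (by exact hx)⟩

end Stmt3Aux

open Stmt3Aux in
theorem stmt3 (m k : ℕ) (hmk : m < k) :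
    ∃ K : ℕ → ℕ →. ℕ, Partrec₂ K ∧ ∃ L : ℕ → Finset ℕ,
      ∀ e : ℕ, {j : ℕ | j < k ∧ (φ e j).Dom}.ncard ≤ m →
        (L e ⊆ Finset.range (k + 1) ∧ (L e).card = m) ∧
        ∀ a ∈ Finset.range (k + 1) \ L e,
          ∃ y : ℕ, y ∈ K e a ∧ y < k ∧ ¬ (φ e y).Dom := by
  classical
  refine ⟨K m k, K_partrec m k, ?_⟩
  -- the finset of halting inputs below k
  set Hf : ℕ → Finset ℕ := fun e => (Finset.range k).filter (fun j => (φ e j).Dom) with hHf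
  have hHfmem : ∀ e j, j ∈ Hf e ↔ j < k ∧ (φ e j).Dom := by
    intro e j; simp [hHf]
  -- the secret inner reduction
  have hL : ∀ e : ℕ, (Hf e).card < m → ∃ u : Finset ℕ,
      Hf e ∪ {k} ⊆ u ∧ u ⊆ Finset.range (k + 1) ∧ u.card = m := by
    intro e hcard
    refine Finset.exists_subsuperset_card_eq ?_ ?_ ?_
    · intro j hj
      rcases Finset.mem_union.1 hj with hj | hj
      · exact Finset.mem_range.2 (Nat.lt_succ_of_lt ((hHfmem e j).1 hj).1)
      · simp at hj; simp [hj]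
    · calc (Hf e ∪ {k}).card ≤ (Hf e).card + 1 := by
            simpa using Finset.card_union_le (Hf e) {k}
        _ ≤ m := hcard
    · simpa using Nat.le_of_lt (Nat.lt_succ_of_lt hmk)
  set L : ℕ → Finset ℕ := fun e =>
    if h : (Hf e).card < m then (hL e h).choose else Hf e with hLdef
  refine ⟨L, fun e he => ?_⟩
  have hncard : {j : ℕ | j < k ∧ (φ e j).Dom}.ncard = (Hf e).card := by
    have : {j : ℕ | j < k ∧ (φ e j).Dom} = ↑(Hf e) := by
      ext j; simp [hHfmem]
    rw [this, Set.ncard_coe_finset]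
  rw [hncard] at he
  constructor
  · by_cases h : (Hf e).card < m
    · simp only [hLdef, dif_pos h]
      exact ⟨(hL e h).choose_spec.2.1, (hL e h).choose_spec.2.2⟩
    · have hm : (Hf e).card = m := le_antisymm he (not_lt.1 h)
      simp only [hLdef, dif_neg h]
      refine ⟨?_, hm⟩
      intro j hj
      exact Finset.mem_range.2 (Nat.lt_succ_of_lt ((hHfmem e j).1 hj).1)
  · intro a ha
    rw [Finset.mem_sdiff, Finset.mem_range] at ha
    obtain ⟨hak, haL⟩ := ha
    by_cases h : (Hf e).card < m
    · -- padded case: a < k necessarily, and φ_e(a) diverges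
      have hspec := (hL e h).choose_spec
      simp only [hLdef, dif_pos h] at haL
      have hane : a ≠ k := by
        intro rfl'
        exact haL (hspec.1 (Finset.mem_union_right _ (by simp [rfl'])))
      have hak' : a < k := lt_of_le_of_ne (Nat.lt_succ_iff.1 hak) hane
      have hdvg : ¬ (φ e a).Dom := by
        intro hd
        exact haL (hspec.1 (Finset.mem_union_left _ ((hHfmem e a).2 ⟨hak', hd⟩)))
      refine ⟨a, ?_, hak', hdvg⟩
      simp [K, hak']
    · -- exact case: L e = Hf e
      have hm : (Hf e).card = m := le_antisymm he (not_lt.1 h)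
      simp only [hLdef, dif_neg h] at haL
      by_cases hak' : a < k
      · have hdvg : ¬ (φ e a).Dom := fun hd => haL ((hHfmem e a).2 ⟨hak', hd⟩)
        exact ⟨a, by simp [K, hak'], hak', hdvg⟩
      · -- a = k : dovetailing case
        -- there is a stage where all of Hf e has converged
        have hstage : ∃ s, cnt k e s = m := by
          have hex : ∀ j ∈ Hf e, ∃ s, (evaln s (cd e) j).isSome = true := by
            intro j hj
            have hd := ((hHfmem e j).1 hj).2
            obtain ⟨s, hs⟩ := evaln_complete.1 (Part.get_mem hd)
            exact ⟨s, Option.isSome_iff_exists.2 ⟨_, hs⟩⟩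
          set f : ℕ → ℕ := fun j =>
            if hj : ∃ s, (evaln s (cd e) j).isSome = true then Nat.find hj else 0 with hfdef
          set s := (Hf e).sup f with hsdef
          have hall : ∀ j ∈ Hf e, (evaln s (cd e) j).isSome = true := by
            intro j hj
            have hj' := hex j hj
            have h1 : (evaln (f j) (cd e) j).isSome = true := by
              simp only [hfdef, dif_pos hj']
              exact Nat.find_spec hj'
            obtain ⟨x, hx⟩ := Option.isSome_iff_exists.1 h1
            have : x ∈ evaln s (cd e) j :=
              evaln_mono (Finset.le_sup hj) (by exact hx)
            exact Option.isSome_iff_exists.2 ⟨x, this⟩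
          refine ⟨s, ?_⟩
          -- fl k e s, as a finset, equals Hf e
          have hnodup : (fl k e s).Nodup := List.nodup_range.filter _
          have hfin : (fl k e s).toFinset = Hf e := by
            apply Finset.Subset.antisymm
            · intro j hj
              rw [List.mem_toFinset] at hj
              exact (hHfmem e j).2 (mem_fl hj)
            · intro j hj
              rw [List.mem_toFinset, fl, List.mem_filter, List.mem_range]
              exact ⟨((hHfmem e j).1 hj).1, hall j hj⟩
          calc cnt k e s = (fl k e s).toFinset.card :=
                (List.toFinset_card_of_nodup hnodup).symm
            _ = m := by rw [hfin, hm]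
        -- the rfind search terminates
        obtain ⟨s, hs⟩ := hstage
        have hdom : (Nat.rfind fun s => Part.some (decide (cnt k e s = m))).Dom := by
          refine Nat.rfind_dom.2 ?_
          exact ⟨s, by simp [hs], fun _ => trivial⟩
        set s₀ := (Nat.rfind fun s => Part.some (decide (cnt k e s = m))).get hdom with hs₀def
        have hs₀mem : s₀ ∈ Nat.rfind fun s => Part.some (decide (cnt k e s = m)) :=
          Part.get_mem hdom
        have hcnt₀ : cnt k e s₀ = m := by
          have := Nat.rfind_spec hs₀mem
          simpa using this
        -- at stage s₀ the converged set is exactly Hf e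
        have hnodup : (fl k e s₀).Nodup := List.nodup_range.filter _
        have hsub : (fl k e s₀).toFinset ⊆ Hf e := by
          intro j hj
          rw [List.mem_toFinset] at hj
          exact (hHfmem e j).2 (mem_fl hj)
        have hcard : (fl k e s₀).toFinset.card = m := by
          rw [List.toFinset_card_of_nodup hnodup]; exact hcnt₀
        have hfin : (fl k e s₀).toFinset = Hf e :=
          Finset.eq_of_subset_of_card_le hsub (by rw [hcard, hm])
        -- some j < k has not converged at stage s₀
        have hexdvg : ∃ j ∈ List.range k, (evaln s₀ (cd e) j).isNone = true := by
          by_contra hcon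
          push_neg at hcon
          have : Finset.range k ⊆ Hf e := by
            intro j hj
            rw [← hfin, List.mem_toFinset, fl, List.mem_filter]
            have hj' : j ∈ List.range k := List.mem_range.2 (Finset.mem_range.1 hj)
            refine ⟨hj', ?_⟩
            have := hcon j hj'
            simpa [Option.isNone_iff_eq_none, Option.isSome_iff_ne_none] using this
          have := Finset.card_le_card this
          rw [Finset.card_range, hm] at this
          omega
        have hlt : pick k e s₀ < k := by
          have := List.findIdx_lt_length_of_exists hexdvg
          simpa [pick] using this
        have hpdvg : ¬ (φ e (pick k e s₀)).Dom := by
          have hlt' : (List.range k).findIdx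
              (fun j => (evaln s₀ (cd e) j).isNone) < (List.range k).length := by
            simpa [pick] using hlt
          have hp := List.findIdx_getElem (w := hlt')
          rw [List.getElem_range] at hp
          have hp' : evaln s₀ (cd e) (pick k e s₀) = none :=
            Option.isNone_iff_eq_none.1 hp
          intro hd
          have hmem : pick k e s₀ ∈ Hf e := (hHfmem e _).2 ⟨hlt, hd⟩
          rw [← hfin, List.mem_toFinset, fl, List.mem_filter] at hmem
          have := hmem.2
          rw [hp'] at this
          simp at this
        refine ⟨pick k e s₀, ?_, hlt, hpdvg⟩
        have : ¬ (a < k) := hak'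
        simp only [K, this, Bool.cond_decide, if_neg this]
        exact Part.mem_map _ hs₀mem
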